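/- Let X, Y be finite sets, W a channel from X to Y, c : X → [0,∞), and ν ≥ 0. For any pmf p_X on X with positive entries, lim_{ρ→0} (1/ρ) E_0^{(ρ,ν)}(p_X|W) = I(p_X, W) − ν E_{p_X}[c(X)], where E_0^{(ρ,ν)}(p_X|W) = − log Σ_y [ Σ_x p_X(x)(W(y|x)e^{ρν c(x)})^{1/(1+ρ)} ]^{1+ρ} and I(p_X, W) is the mutual information of the joint distribution p_X(x)W(y|x). -/

import Mathlib

open Finset Real

lemma termx (w a : ℝ) (hw : 0 ≤ w) :
    HasDerivAt (fun ρ : ℝ => (w * Real.exp (ρ * a)) ^ ((1:ℝ)/(1+ρ)))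
      (w * (a - Real.log w)) 0 := by
  rcases eq_or_lt_of_le hw with h | h
  · subst h
    have : HasDerivAt (fun _ : ℝ => (0:ℝ)) 0 (0:ℝ) := hasDerivAt_const 0 0
    have heq : (fun ρ : ℝ => ((0:ℝ) * Real.exp (ρ * a)) ^ ((1:ℝ)/(1+ρ))) =ᶠ[nhds 0]
        (fun _ : ℝ => (0:ℝ)) := by
      filter_upwards [Ioo_mem_nhds (by norm_num : (-1:ℝ) < 0) (by norm_num : (0:ℝ) < 1)] with ρ hρ
      have h1 : (0:ℝ) < 1 + ρ := by linarith [hρ.1]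
      rw [zero_mul, Real.zero_rpow (by positivity)]
    simpa using this.congr_of_eventuallyEq heq
  · have hnum : HasDerivAt (fun ρ : ℝ => Real.log w + ρ * a) a 0 :=
      by simpa using ((hasDerivAt_id (0:ℝ)).mul_const a).const_add (Real.log w)
    have hden : HasDerivAt (fun ρ : ℝ => 1 + ρ) 1 0 := (hasDerivAt_id 0).const_add 1
    have hu : HasDerivAt (fun ρ : ℝ => (Real.log w + ρ * a) / (1 + ρ))
        ((a * (1 + 0) - (Real.log w + 0 * a) * 1) / (1 + 0)^2) 0 :=
      hnum.div hden (by norm_num)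
    have hv := hu.exp
    have heq : (fun ρ : ℝ => (w * Real.exp (ρ * a)) ^ ((1:ℝ)/(1+ρ))) =ᶠ[nhds 0]
        (fun ρ : ℝ => Real.exp ((Real.log w + ρ * a) / (1 + ρ))) := by
      filter_upwards [Ioo_mem_nhds (by norm_num : (-1:ℝ) < 0) (by norm_num : (0:ℝ) < 1)] with ρ hρ
      have h1 : (0:ℝ) < 1 + ρ := by linarith [hρ.1]
      rw [Real.rpow_def_of_pos (by positivity), Real.log_mul h.ne' (Real.exp_ne_zero _),
        Real.log_exp]
      ring_nf
    have := hv.congr_of_eventuallyEq heq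
    refine this.congr_deriv ?_
    symm
    simp [Real.exp_log h]

lemma termy {X : Type*} [Fintype X] (p : X → ℝ) (hp : ∀ x, 0 < p x)
    (w : X → ℝ) (hw : ∀ x, 0 ≤ w x) (a : X → ℝ) :
    HasDerivAt (fun ρ : ℝ => (∑ x, p x * (w x * Real.exp (ρ * a x)) ^ ((1:ℝ)/(1+ρ))) ^ (1+ρ))
      ((∑ x, p x * w x) * Real.log (∑ x, p x * w x)
        + ∑ x, p x * (w x * (a x - Real.log (w x)))) 0 := by
  set q : ℝ := ∑ x, p x * w x with hq
  set A : ℝ := ∑ x, p x * (w x * (a x - Real.log (w x))) with hA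
  have hh : HasDerivAt (fun ρ : ℝ => ∑ x, p x * (w x * Real.exp (ρ * a x)) ^ ((1:ℝ)/(1+ρ))) A 0 :=
    HasDerivAt.fun_sum (fun x _ => (termx (w x) (a x) (hw x)).const_mul (p x))
  have hh0 : ∑ x, p x * (w x * Real.exp ((0:ℝ) * a x)) ^ ((1:ℝ)/(1+(0:ℝ))) = q := by
    simp [hq]
  rcases eq_or_lt_of_le (Finset.sum_nonneg (fun x _ => mul_nonneg (hp x).le (hw x)) : 0 ≤ q) with h0 | h0
  · -- q = 0, all w x = 0
    have hwz : ∀ x, w x = 0 := by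
      intro x
      have := (Finset.sum_eq_zero_iff_of_nonneg
        (fun x _ => mul_nonneg (hp x).le (hw x))).mp h0.symm x (Finset.mem_univ x)
      exact le_antisymm (by nlinarith [hp x, hw x]) (hw x)
    have hz : HasDerivAt (fun _ : ℝ => (0:ℝ)) 0 (0:ℝ) := hasDerivAt_const 0 0
    have heq : (fun ρ : ℝ => (∑ x, p x * (w x * Real.exp (ρ * a x)) ^ ((1:ℝ)/(1+ρ))) ^ (1+ρ))
        =ᶠ[nhds 0] (fun _ : ℝ => (0:ℝ)) := by
      filter_upwards [Ioo_mem_nhds (by norm_num : (-1:ℝ) < 0) (by norm_num : (0:ℝ) < 1)] with ρ hρ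
      have h1 : (0:ℝ) < 1 + ρ := by linarith [hρ.1]
      have : ∀ x : X, p x * (w x * Real.exp (ρ * a x)) ^ ((1:ℝ)/(1+ρ)) = 0 := by
        intro x
        rw [hwz x, zero_mul, Real.zero_rpow (by positivity), mul_zero]
      rw [Finset.sum_eq_zero (fun x _ => this x), Real.zero_rpow h1.ne']
    have hAz : A = 0 := by
      rw [hA]; exact Finset.sum_eq_zero (fun x _ => by rw [hwz x]; ring)
    have hq0 : q = 0 := by rw [hq, ← h0]
    simpa [hq0, hAz] using hz.congr_of_eventuallyEq heq
  · -- q > 0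
    have hcont := hh.continuousAt
    have h0' : 0 < ∑ x, p x * (w x * Real.exp ((0:ℝ) * a x)) ^ ((1:ℝ)/(1+(0:ℝ))) := by
      rw [hh0]; exact h0
    have hpos : ∀ᶠ ρ in nhds (0:ℝ),
        0 < ∑ x, p x * (w x * Real.exp (ρ * a x)) ^ ((1:ℝ)/(1+ρ)) := by
      filter_upwards [hcont.preimage_mem_nhds (Ioi_mem_nhds h0')] with ρ hρ using hρ
    have hlog : HasDerivAt (fun ρ : ℝ =>
        Real.log (∑ x, p x * (w x * Real.exp (ρ * a x)) ^ ((1:ℝ)/(1+ρ)))) (A / q) 0 := by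
      have := hh.log (by rw [hh0]; exact h0.ne')
      rwa [hh0] at this
    have hden : HasDerivAt (fun ρ : ℝ => 1 + ρ) 1 0 := (hasDerivAt_id 0).const_add 1
    have hv := (hlog.mul hden).exp
    have heq : (fun ρ : ℝ => (∑ x, p x * (w x * Real.exp (ρ * a x)) ^ ((1:ℝ)/(1+ρ))) ^ (1+ρ))
        =ᶠ[nhds 0] (fun ρ : ℝ => Real.exp
          (Real.log (∑ x, p x * (w x * Real.exp (ρ * a x)) ^ ((1:ℝ)/(1+ρ))) * (1 + ρ))) := by
      filter_upwards [hpos] with ρ hρ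
      rw [Real.rpow_def_of_pos hρ]
    have hfin := hv.congr_of_eventuallyEq heq
    refine hfin.congr_deriv ?_
    symm
    simp only [Pi.mul_apply]
    rw [hh0]
    rw [show Real.log q * (1 + 0) = Real.log q by ring, Real.exp_log h0]
    rw [← hq]
    have hq0 : q ≠ 0 := h0.ne'
    field_simp
    ring

theorem stmt_7 {X Y : Type*} [Fintype X] [Fintype Y]
    (W : X → Y → ℝ) (hW0 : ∀ x y, 0 ≤ W x y) (hW1 : ∀ x, ∑ y, W x y = 1)
    (c : X → ℝ) (hc : ∀ x, 0 ≤ c x) (nu : ℝ) (hnu : 0 ≤ nu)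
    (p : X → ℝ) (hp0 : ∀ x, 0 < p x) (hp1 : ∑ x, p x = 1) :
    Filter.Tendsto
      (fun rho : ℝ => (1 / rho) *
        (- Real.log (∑ y,
          (∑ x, p x * (W x y * Real.exp (rho * nu * c x)) ^ ((1 : ℝ) / (1 + rho))) ^ (1 + rho))))
      (nhdsWithin 0 (Set.Ioi (-1 : ℝ) \ {0}))
      (nhds ((∑ x, ∑ y, p x * W x y * Real.log (W x y / ∑ x', p x' * W x' y)) -
        nu * ∑ x, p x * c x)) := by
  have hqpos : ∀ x y, 0 < W x y → 0 < ∑ x', p x' * W x' y := by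
    intro x y h
    exact lt_of_lt_of_le (mul_pos (hp0 x) h)
      (Finset.single_le_sum (f := fun x' => p x' * W x' y)
        (fun i _ => mul_nonneg (hp0 i).le (hW0 i y)) (Finset.mem_univ x))
  set T : ℝ := (∑ x, ∑ y, p x * W x y * Real.log (W x y / ∑ x', p x' * W x' y)) -
        nu * ∑ x, p x * c x with hT
  -- hg : derivative of g
  set D : ℝ := ∑ y, ((∑ x, p x * W x y) * Real.log (∑ x, p x * W x y)
      + ∑ x, p x * W x y * (nu * c x - Real.log (W x y))) with hD
  have hg : HasDerivAt (fun ρ : ℝ => ∑ y,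
      (∑ x, p x * (W x y * Real.exp (ρ * nu * c x)) ^ ((1:ℝ)/(1+ρ))) ^ (1+ρ)) D 0 := by
    have h1 := HasDerivAt.fun_sum (u := Finset.univ)
      (fun (y : Y) (_ : y ∈ Finset.univ) =>
        termy p hp0 (fun x => W x y) (fun x => hW0 x y) (fun x => nu * c x))
    simpa only [← mul_assoc] using h1
  have hg0 : (∑ y, (∑ x, p x * (W x y * Real.exp ((0:ℝ) * nu * c x)) ^
      ((1:ℝ)/(1+(0:ℝ)))) ^ (1+(0:ℝ))) = 1 := by
    simp only [zero_mul, Real.exp_zero, mul_one, div_self (by norm_num : (1:ℝ)+0 ≠ 0)]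
    norm_num
    rw [Finset.sum_comm]
    simp only [← Finset.mul_sum, hW1, mul_one]
    exact hp1
  have hF : HasDerivAt (fun ρ : ℝ => -Real.log (∑ y,
      (∑ x, p x * (W x y * Real.exp (ρ * nu * c x)) ^ ((1:ℝ)/(1+ρ))) ^ (1+ρ))) T 0 := by
    have := (hg.log (by rw [hg0]; norm_num)).neg
    refine this.congr_deriv ?_
    symm
    rw [hg0, div_one, hT, hD]
    -- algebra : T = -D
    have key1 : ∀ x y, p x * W x y * Real.log (W x y / ∑ x', p x' * W x' y)
        = p x * W x y * Real.log (W x y) - p x * W x y * Real.log (∑ x', p x' * W x' y) := by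
      intro x y
      rcases eq_or_lt_of_le (hW0 x y) with h | h
      · rw [← h]; simp
      · rw [Real.log_div h.ne' (hqpos x y h).ne']; ring
    have key2 : ∀ x y, p x * W x y * (nu * c x - Real.log (W x y))
        = p x * W x y * (nu * c x) - p x * W x y * Real.log (W x y) := by
      intro x y; ring
    simp only [key1, key2, Finset.sum_sub_distrib, Finset.sum_add_distrib]
    have e1 : ∑ y, ∑ x, p x * W x y * (nu * c x) = nu * ∑ x, p x * c x := by
      rw [Finset.sum_comm, Finset.mul_sum]
      refine Finset.sum_congr rfl (fun x _ => ?_)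
      rw [← Finset.sum_mul, ← Finset.mul_sum, hW1 x, mul_one]
      ring
    have e2 : ∑ x, ∑ y, p x * W x y * Real.log (∑ x', p x' * W x' y)
        = ∑ y, (∑ x, p x * W x y) * Real.log (∑ x, p x * W x y) := by
      rw [Finset.sum_comm]
      exact Finset.sum_congr rfl (fun y _ => by rw [Finset.sum_mul])
    have e3 : ∑ x, ∑ y, p x * W x y * Real.log (W x y)
        = ∑ y, ∑ x, p x * W x y * Real.log (W x y) := by rw [Finset.sum_comm]
    rw [e2, e3, e1]
    ring
  rw [hasDerivAt_iff_tendsto_slope] at hF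
  have hsub : nhdsWithin (0:ℝ) (Set.Ioi (-1 : ℝ) \ {0}) ≤ nhdsWithin 0 {(0:ℝ)}ᶜ :=
    nhdsWithin_mono 0 (fun x hx => hx.2)
  refine Filter.Tendsto.congr ?_ (hF.mono_left hsub)
  intro ρ
  rw [slope_def_field]
  have hF0 : -Real.log (∑ y, (∑ x, p x * (W x y * Real.exp ((0:ℝ) * nu * c x)) ^
      ((1:ℝ)/(1+(0:ℝ)))) ^ (1+(0:ℝ))) = 0 := by
    rw [hg0, Real.log_one, neg_zero]
  simp only [hF0]
  rw [sub_zero, sub_zero, div_eq_inv_mul, ← one_div]
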